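/- Define y(p,q) = ln((1−q)/(1−p)) / ln(p/q) for p, q ∈ (0,1) with p ≠ q. Then: (i) for all 0 < q < p < 1, y(p,q) < p/(1−p); and (ii) for all 0 < p < q < 1, y(p,q) > p/(1−p). -/

import Mathlib

/-- `y(p,q) = ln((1−q)/(1−p)) / ln(p/q)`. -/
noncomputable def yval (p q : ℝ) : ℝ :=
  Real.log ((1 - q) / (1 - p)) / Real.log (p / q)

lemma key_ineq (p q : ℝ) (hp0 : 0 < p) (hp1 : p < 1) (hq0 : 0 < q) (hq1 : q < 1)
    (hne : p ≠ q) :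
    (1 - p) * Real.log ((1 - q) / (1 - p)) < p * Real.log (p / q) := by
  have h1p : (0:ℝ) < 1 - p := by linarith
  have h1q : (0:ℝ) < 1 - q := by linarith
  have hA : Real.log ((1 - q) / (1 - p)) < (1 - q) / (1 - p) - 1 := by
    apply Real.log_lt_sub_one_of_pos (by positivity)
    intro h
    apply hne
    field_simp at h
    linarith
  have hB : Real.log (q / p) < q / p - 1 := by
    apply Real.log_lt_sub_one_of_pos (by positivity)
    intro h
    apply hne
    field_simp at h
    linarith
  have e1 : (1 - p) * ((1 - q) / (1 - p) - 1) = p - q := by field_simp; ring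
  have e2 : p * (q / p - 1) = q - p := by field_simp
  have hlog : Real.log (p / q) = - Real.log (q / p) := by
    rw [Real.log_div hp0.ne' hq0.ne', Real.log_div hq0.ne' hp0.ne']; ring
  have h1 : (1 - p) * Real.log ((1 - q) / (1 - p)) < p - q := by
    nlinarith [mul_lt_mul_of_pos_left hA h1p]
  have h2 : p * Real.log (q / p) < q - p := by
    nlinarith [mul_lt_mul_of_pos_left hB hp0]
  rw [hlog]; nlinarith

theorem stmt6 :
    (∀ p q : ℝ, 0 < q → q < p → p < 1 → yval p q < p / (1 - p)) ∧
    (∀ p q : ℝ, 0 < p → p < q → q < 1 → p / (1 - p) < yval p q) := by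
  constructor
  · intro p q hq0 hqp hp1
    have hp0 : 0 < p := hq0.trans hqp
    have h1p : (0:ℝ) < 1 - p := by linarith
    have hlogpos : 0 < Real.log (p / q) :=
      Real.log_pos (by rw [lt_div_iff₀ hq0]; linarith)
    have key := key_ineq p q hp0 hp1 hq0 (by linarith) (by linarith)
    rw [yval, div_lt_div_iff₀ hlogpos h1p]
    nlinarith
  · intro p q hp0 hpq hq1
    have hq0 : 0 < q := hp0.trans hpq
    have hp1 : p < 1 := hpq.trans hq1
    have h1p : (0:ℝ) < 1 - p := by linarith
    have hlogneg : Real.log (p / q) < 0 := by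
      apply Real.log_neg (by positivity) (by rw [div_lt_one hq0]; linarith)
    have key := key_ineq p q hp0 hp1 hq0 hq1 (by linarith)
    have hnB : (0:ℝ) < -Real.log (p / q) := by linarith
    rw [yval, show Real.log ((1 - q) / (1 - p)) / Real.log (p / q)
        = -Real.log ((1 - q) / (1 - p)) / -Real.log (p / q) by rw [neg_div_neg_eq],
      div_lt_div_iff₀ h1p hnB]
    nlinarith
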